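/- Let u : ℝ → ℝ be continuous, 1-periodic (u(h+1) = u(h) for all h), with u(h) ≥ 0 for all h, and such that h ↦ u(h)³ is twice continuously differentiable. Then for every h ∈ [0,1], u(h)³ ≤ (∫₀¹ u(s)² ds)^{3/2} + (2/3)·(∫₀¹ ((u³)''(s))² ds)^{1/2}. -/

import Mathlib

open intervalIntegral MeasureTheory

/-- Cauchy–Schwarz on an interval. -/
lemma cs_interval {w : ℝ → ℝ} (hw : Continuous w) {a b : ℝ} (hab : a ≤ b) :
    |∫ t in a..b, w t| ≤ Real.sqrt (b - a) * Real.sqrt (∫ t in a..b, (w t) ^ 2) := by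
  set μ := volume.restrict (Set.Ioc a b) with hμ
  have hfin : IsFiniteMeasure μ := by
    constructor
    rw [hμ, Measure.restrict_apply_univ]
    exact measure_Ioc_lt_top
  obtain ⟨C, hC⟩ := (isCompact_Icc (a := a) (b := b)).exists_bound_of_continuousOn
    hw.continuousOn
  have hmem : MemLp w (ENNReal.ofReal 2) μ :=
    MemLp.of_bound hw.aestronglyMeasurable.restrict C
      (ae_restrict_of_forall_mem measurableSet_Ioc fun x hx => hC x (Set.Ioc_subset_Icc_self hx))
  have hone : MemLp (fun _ : ℝ => (1:ℝ)) (ENNReal.ofReal 2) μ := memLp_const 1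
  have hpq : Real.HolderConjugate 2 2 := ⟨by norm_num, by norm_num, by norm_num⟩
  have hH := integral_mul_norm_le_Lp_mul_Lq hpq hmem hone
  -- rewrite Hölder
  have e1 : (∫ x, ‖w x‖ * ‖(1:ℝ)‖ ∂μ) = ∫ x, |w x| ∂μ := by
    simp [Real.norm_eq_abs]
  have e2 : (∫ x, ‖w x‖ ^ (2:ℝ) ∂μ) = ∫ x, (w x) ^ 2 ∂μ := by
    congr 1; funext x
    have h2 : |w x| ^ (2:ℝ) = |w x| ^ (2:ℕ) := by
      rw [← Real.rpow_natCast]; norm_num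
    rw [Real.norm_eq_abs, h2, sq_abs]
  have e3 : (∫ _x, ‖(1:ℝ)‖ ^ (2:ℝ) ∂μ) = b - a := by
    simp [hμ, Real.volume_Ioc, ENNReal.toReal_ofReal (sub_nonneg.2 hab), hab]
  rw [e1, e2, e3] at hH
  have habs : |∫ t in a..b, w t| ≤ ∫ x, |w x| ∂μ := by
    rw [intervalIntegral.integral_of_le hab]
    exact (norm_integral_le_integral_norm w).trans_eq (by simp [Real.norm_eq_abs, hμ])
  have hsq : ∫ x, (w x) ^ 2 ∂μ = ∫ t in a..b, (w t) ^ 2 := by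
    rw [intervalIntegral.integral_of_le hab]
  calc |∫ t in a..b, w t| ≤ (∫ x, (w x)^2 ∂μ) ^ ((1:ℝ)/2) * (b - a) ^ ((1:ℝ)/2) :=
        habs.trans hH
    _ = Real.sqrt (b - a) * Real.sqrt (∫ t in a..b, (w t) ^ 2) := by
        rw [hsq, ← Real.sqrt_eq_rpow, ← Real.sqrt_eq_rpow, mul_comm]

/-- Monotonicity of the integral of a nonneg function in the domain. -/
lemma sub_integral_le {w : ℝ → ℝ} (hw : Continuous w) (hwn : ∀ t, 0 ≤ w t) {a b : ℝ}
    (h0 : 0 ≤ a) (hab : a ≤ b) (hb1 : b ≤ 1) :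
    ∫ t in a..b, w t ≤ ∫ t in (0:ℝ)..1, w t := by
  have i1 : IntervalIntegrable w volume 0 a := hw.intervalIntegrable _ _
  have i2 : IntervalIntegrable w volume a b := hw.intervalIntegrable _ _
  have i3 : IntervalIntegrable w volume b 1 := hw.intervalIntegrable _ _
  have key : (∫ t in (0:ℝ)..a, w t) + ((∫ t in a..b, w t) + ∫ t in b..1, w t)
      = ∫ t in (0:ℝ)..1, w t := by
    rw [integral_add_adjacent_intervals i2 i3, integral_add_adjacent_intervals i1 (i2.trans i3)]
  have n1 : 0 ≤ ∫ t in (0:ℝ)..a, w t :=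
    intervalIntegral.integral_nonneg h0 fun t _ => hwn t
  have n3 : 0 ≤ ∫ t in b..(1:ℝ), w t :=
    intervalIntegral.integral_nonneg hb1 fun t _ => hwn t
  linarith

/-- Integral of sqrt. -/
lemma int_sqrt {δ : ℝ} (h0 : 0 ≤ δ) :
    ∫ t in (0:ℝ)..δ, Real.sqrt t = 2 / 3 * δ ^ ((3:ℝ)/2) := by
  have hc : ∀ t ∈ Set.uIcc (0:ℝ) δ, Real.sqrt t = t ^ ((1:ℝ)/2) := fun t ht =>
    Real.sqrt_eq_rpow t
  rw [intervalIntegral.integral_congr hc, integral_rpow (Or.inl (by norm_num))]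
  rw [Real.zero_rpow (by norm_num)]
  norm_num
  ring

theorem uniform_upper_bound_cube
    (u : ℝ → ℝ) (hu : Continuous u) (hper : ∀ h : ℝ, u (h + 1) = u h)
    (hnn : ∀ h : ℝ, 0 ≤ u h)
    (hcd : ContDiff ℝ 2 (fun x => (u x) ^ 3)) :
    ∀ h ∈ Set.Icc (0:ℝ) 1,
      (u h) ^ 3
        ≤ (∫ s in (0:ℝ)..1, (u s) ^ 2) ^ ((3:ℝ) / 2)
          + (2 / 3) * Real.sqrt (∫ s in (0:ℝ)..1, (iteratedDeriv 2 (fun x => (u x) ^ 3) s) ^ 2) := by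
  intro h hh
  set v : ℝ → ℝ := fun x => (u x) ^ 3 with hv
  set w : ℝ → ℝ := iteratedDeriv 2 v with hw
  set E : ℝ := ∫ s in (0:ℝ)..1, (w s) ^ 2 with hE
  -- regularity
  have hvdiff : Differentiable ℝ v := hcd.differentiable (by norm_num)
  have hcd' : ContDiff ℝ 1 (deriv v) := by
    have : ((2 : ℕ) : WithTop ℕ∞) = (1 : WithTop ℕ∞) + 1 := by norm_num
    rw [show ContDiff ℝ 2 v ↔ ContDiff ℝ ((1:WithTop ℕ∞)+1) v from by norm_num] at hcd
    exact ((contDiff_succ_iff_deriv).1 hcd).2.2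
  have hdv_cont : Continuous (deriv v) := hcd'.continuous
  have hdv_diff : Differentiable ℝ (deriv v) := hcd'.differentiable one_ne_zero
  have hw_eq : w = deriv (deriv v) := by
    rw [hw, show (2:ℕ) = 1 + 1 from rfl, iteratedDeriv_succ, iteratedDeriv_one]
  have hw_cont : Continuous w := by
    rw [hw_eq]
    exact (contDiff_one_iff_deriv.1 hcd').2
  have hE_nonneg : 0 ≤ E :=
    intervalIntegral.integral_nonneg zero_le_one fun t _ => sq_nonneg _
  -- minimum point
  obtain ⟨c, hc01, hcmin⟩ := isCompact_Icc.exists_isMinOn (Set.nonempty_Icc.2 zero_le_one)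
    hu.continuousOn
  have hglob : ∀ x, u c ≤ u x := by
    intro x
    have hp : Function.Periodic u 1 := hper
    obtain ⟨y, hy, hxy⟩ := hp.exists_mem_Ico₀ one_pos x
    rw [hxy]
    exact hcmin (Set.Ico_subset_Icc_self hy)
  have hglobv : ∀ x, v c ≤ v x := fun x => pow_le_pow_left₀ (hnn c) (hglob x) 3
  -- derivative vanishes at minimum
  have hderiv0 : deriv v c = 0 :=
    (IsLocalMin.deriv_eq_zero (Filter.Eventually.of_forall hglobv))
  -- bound on v c
  have hvc : v c ≤ (∫ s in (0:ℝ)..1, (u s) ^ 2) ^ ((3:ℝ)/2) := by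
    have hsq : (u c) ^ 2 ≤ ∫ s in (0:ℝ)..1, (u s) ^ 2 := by
      have : (u c) ^ 2 = ∫ _s in (0:ℝ)..1, (u c) ^ 2 := by simp
      rw [this]
      exact intervalIntegral.integral_mono_on zero_le_one
        (intervalIntegrable_const) ((hu.pow 2).intervalIntegrable _ _)
        (fun s _ => pow_le_pow_left₀ (hnn c) (hglob s) 2)
    calc v c = ((u c) ^ 2) ^ ((3:ℝ)/2) := by
          show u c ^ 3 = _
          rw [ ← Real.rpow_natCast (u c) 2, ← Real.rpow_mul (hnn c),
            ← Real.rpow_natCast (u c) 3]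
          norm_num
      _ ≤ (∫ s in (0:ℝ)..1, (u s) ^ 2) ^ ((3:ℝ)/2) :=
          Real.rpow_le_rpow (sq_nonneg _) hsq (by norm_num)
  -- pointwise bound on deriv v on [0,1]
  have hptw : ∀ t ∈ Set.Icc (0:ℝ) 1, |deriv v t| ≤ Real.sqrt E * Real.sqrt (|t - c|) := by
    intro t ht
    have hFTC : ∀ p q : ℝ, ∫ s in p..q, w s = deriv v q - deriv v p := by
      intro p q
      rw [hw_eq]
      exact intervalIntegral.integral_deriv_eq_sub (fun x _ => hdv_diff x)
        ((contDiff_one_iff_deriv.1 hcd').2.intervalIntegrable _ _)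
    rcases le_total c t with hct | htc
    · have h1 : deriv v t = ∫ s in c..t, w s := by rw [hFTC c t, hderiv0, sub_zero]
      have h2 := cs_interval hw_cont hct
      have h3 : (∫ s in c..t, (w s)^2) ≤ E := by
        rw [hE]
        exact sub_integral_le (hw_cont.pow 2) (fun t => sq_nonneg _) hc01.1 hct ht.2
      rw [h1]
      calc |∫ s in c..t, w s| ≤ Real.sqrt (t - c) * Real.sqrt (∫ s in c..t, (w s)^2) := h2
        _ ≤ Real.sqrt (t - c) * Real.sqrt E :=
            mul_le_mul_of_nonneg_left (Real.sqrt_le_sqrt h3) (Real.sqrt_nonneg _)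
        _ = Real.sqrt E * Real.sqrt |t - c| := by
            rw [abs_of_nonneg (sub_nonneg.2 hct), mul_comm]
    · have h1 : deriv v t = -∫ s in t..c, w s := by
        rw [hFTC t c, hderiv0]; ring
      have h2 := cs_interval hw_cont htc
      have h3 : (∫ s in t..c, (w s)^2) ≤ E := by
        rw [hE]
        exact sub_integral_le (hw_cont.pow 2) (fun t => sq_nonneg _) ht.1 htc hc01.2
      rw [h1, abs_neg]
      calc |∫ s in t..c, w s| ≤ Real.sqrt (c - t) * Real.sqrt (∫ s in t..c, (w s)^2) := h2
        _ ≤ Real.sqrt (c - t) * Real.sqrt E :=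
            mul_le_mul_of_nonneg_left (Real.sqrt_le_sqrt h3) (Real.sqrt_nonneg _)
        _ = Real.sqrt E * Real.sqrt |t - c| := by
            rw [abs_sub_comm, abs_of_nonneg (sub_nonneg.2 htc), mul_comm]
  -- main Hölder-type estimate
  have hmain : v h - v c ≤ 2 / 3 * Real.sqrt E := by
    have hFTCv : ∀ p q : ℝ, ∫ s in p..q, deriv v s = v q - v p := fun p q =>
      intervalIntegral.integral_deriv_eq_sub (fun x _ => hvdiff x)
        (hdv_cont.intervalIntegrable _ _)
    rcases le_total c h with hch | hhc
    · have e1 : v h - v c = ∫ s in c..h, deriv v s := (hFTCv c h).symm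
      have e2 : (∫ s in c..h, deriv v s)
          ≤ ∫ s in c..h, Real.sqrt E * Real.sqrt (s - c) := by
        apply intervalIntegral.integral_mono_on hch
          (hdv_cont.intervalIntegrable _ _)
          ((continuous_const.mul
            (Real.continuous_sqrt.comp (continuous_id.sub continuous_const))).intervalIntegrable _ _)
        intro s hs
        have := hptw s ⟨le_trans hc01.1 hs.1, le_trans hs.2 hh.2⟩
        rw [abs_of_nonneg (sub_nonneg.2 hs.1)] at this
        exact (le_abs_self _).trans this
      have e3 : (∫ s in c..h, Real.sqrt E * Real.sqrt (s - c))
          = Real.sqrt E * (2 / 3 * (h - c) ^ ((3:ℝ)/2)) := by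
        rw [intervalIntegral.integral_const_mul]
        congr 1
        rw [show (∫ s in c..h, Real.sqrt (s - c))
            = ∫ s in c - c..h - c, Real.sqrt s from
          intervalIntegral.integral_comp_sub_right _ c, sub_self]
        exact int_sqrt (sub_nonneg.2 hch)
      have e4 : (h - c) ^ ((3:ℝ)/2) ≤ 1 :=
        Real.rpow_le_one (sub_nonneg.2 hch) (by linarith [hh.2, hc01.1]) (by norm_num)
      have := e1 ▸ (e2.trans_eq e3)
      nlinarith [Real.sqrt_nonneg E]
    · have e1 : v h - v c = ∫ s in h..c, -(deriv v s) := by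
        rw [intervalIntegral.integral_neg, hFTCv h c]; ring
      have e2 : (∫ s in h..c, -(deriv v s))
          ≤ ∫ s in h..c, Real.sqrt E * Real.sqrt (c - s) := by
        apply intervalIntegral.integral_mono_on hhc
          ((hdv_cont.intervalIntegrable _ _).neg)
          ((continuous_const.mul
            (Real.continuous_sqrt.comp (continuous_const.sub continuous_id))).intervalIntegrable _ _)
        intro s hs
        have hb := hptw s ⟨le_trans hh.1 hs.1, le_trans hs.2 hc01.2⟩
        rw [abs_sub_comm, abs_of_nonneg (sub_nonneg.2 hs.2)] at hb
        exact (neg_le_abs _).trans hb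
      have e3 : (∫ s in h..c, Real.sqrt E * Real.sqrt (c - s))
          = Real.sqrt E * (2 / 3 * (c - h) ^ ((3:ℝ)/2)) := by
        rw [intervalIntegral.integral_const_mul]
        congr 1
        rw [show (∫ s in h..c, Real.sqrt (c - s))
            = ∫ s in c - c..c - h, Real.sqrt s from
          intervalIntegral.integral_comp_sub_left _ c, sub_self]
        exact int_sqrt (sub_nonneg.2 hhc)
      have e4 : (c - h) ^ ((3:ℝ)/2) ≤ 1 :=
        Real.rpow_le_one (sub_nonneg.2 hhc) (by linarith [hc01.2, hh.1]) (by norm_num)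
      have := e1 ▸ (e2.trans_eq e3)
      nlinarith [Real.sqrt_nonneg E]
  -- combine
  calc v h = v c + (v h - v c) := by ring
    _ ≤ (∫ s in (0:ℝ)..1, (u s) ^ 2) ^ ((3:ℝ)/2) + 2 / 3 * Real.sqrt E :=
        add_le_add hvc hmain
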